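/- Let k be an algebraically closed field of characteristic 2, let L ⊆ K be function fields of one variable over k with K finite over L, let v be a place of K and w the place of L induced by v. If there exist t ∈ L with w(t) = 1 and h ∈ O_v such that v(t + h⁴) is odd, then for every t' ∈ L with w(t') = 1 there exists h' ∈ O_v such that v(t' + h'⁴) is odd. (Pseudo-tameness is independent of the choice of uniformizer.) -/

import Mathlib

set_option linter.unusedSectionVars false
set_option maxHeartbeats 1000000

/-- A place of a function field `K` over `k`. -/
structure Place (k K : Type*) [Field k] [Field K] [Algebra k K] where
  v : K → ℤ
  v_mul : ∀ x y : K, x ≠ 0 → y ≠ 0 → v (x * y) = v x + v y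
  v_add : ∀ x y : K, x ≠ 0 → y ≠ 0 → x + y ≠ 0 → min (v x) (v y) ≤ v (x + y)
  v_surj : ∀ n : ℤ, ∃ x : K, x ≠ 0 ∧ v x = n
  v_const : ∀ c : k, c ≠ 0 → v (algebraMap k K c) = 0

/-- `K` is a function field of one variable over `k`. -/
def IsFunctionFieldOneVar (k K : Type*) [Field k] [Field K] [Algebra k K] : Prop :=
  ∃ x : K, Transcendental k x ∧
    FiniteDimensional (IntermediateField.adjoin k ({x} : Set K)) K

/-- The place `w` of the subfield `L` is the one induced by the place `v` of `K`. -/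
def Induces {k L K : Type*} [Field k] [Field L] [Field K]
    [Algebra k L] [Algebra k K] [Algebra L K]
    (v : Place k K) (w : Place k L) : Prop :=
  ∃ e : ℤ, 1 ≤ e ∧ ∀ x : L, x ≠ 0 → v.v (algebraMap L K x) = e * w.v x

namespace Place

variable {k F : Type*} [Field k] [Field F] [Algebra k F] (P : Place k F)

theorem v_one : P.v 1 = 0 := by
  have := P.v_mul 1 1 one_ne_zero one_ne_zero
  simpa using this.symm

theorem v_pow {x : F} (hx : x ≠ 0) (m : ℕ) : P.v (x ^ m) = m * P.v x := by
  induction m with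
  | zero => simpa using P.v_one
  | succ i ih =>
      have h : P.v (x ^ i * x) = P.v (x ^ i) + P.v x :=
        P.v_mul _ _ (pow_ne_zero _ hx) hx
      rw [pow_succ, h, ih]; push_cast; ring

theorem v_inv {x : F} (hx : x ≠ 0) : P.v x⁻¹ = - P.v x := by
  have h := P.v_mul x x⁻¹ hx (inv_ne_zero hx)
  rw [mul_inv_cancel₀ hx, P.v_one] at h
  omega

theorem v_div {x y : F} (hx : x ≠ 0) (hy : y ≠ 0) : P.v (x / y) = P.v x - P.v y := by
  rw [div_eq_mul_inv, P.v_mul x y⁻¹ hx (inv_ne_zero hy), P.v_inv hy]; ring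

theorem v_neg_one : P.v (-1 : F) = 0 := by
  have h := P.v_mul (-1 : F) (-1 : F) (by norm_num) (by norm_num)
  rw [show ((-1 : F) * (-1 : F)) = 1 by ring, P.v_one] at h
  omega

theorem v_neg {x : F} (hx : x ≠ 0) : P.v (-x) = P.v x := by
  have h := P.v_mul (-1 : F) x (by norm_num) hx
  rw [show ((-1 : F) * x) = -x by ring, P.v_neg_one] at h
  omega

/-- `x` is zero or has valuation at least `b`. -/
def Big (b : ℤ) (x : F) : Prop := x = 0 ∨ (x ≠ 0 ∧ b ≤ P.v x)

theorem big_zero (b : ℤ) : P.Big b 0 := Or.inl rfl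

theorem big_add {b : ℤ} {x y : F} (hx : P.Big b x) (hy : P.Big b y) : P.Big b (x + y) := by
  rcases hx with rfl | ⟨hx0, hxv⟩
  · simpa using hy
  rcases hy with rfl | ⟨hy0, hyv⟩
  · rw [add_zero]; exact Or.inr ⟨hx0, hxv⟩
  by_cases h : x + y = 0
  · exact Or.inl h
  · exact Or.inr ⟨h, le_trans (le_min hxv hyv) (P.v_add x y hx0 hy0 h)⟩

theorem big_mul {b c : ℤ} {x y : F} (hx : P.Big b x) (hy : P.Big c y) :
    P.Big (b + c) (x * y) := by
  rcases hx with rfl | ⟨hx0, hxv⟩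
  · exact Or.inl (by simp)
  rcases hy with rfl | ⟨hy0, hyv⟩
  · exact Or.inl (by simp)
  exact Or.inr ⟨mul_ne_zero hx0 hy0, by rw [P.v_mul x y hx0 hy0]; omega⟩

theorem big_pow {x : F} (hx : P.Big 0 x) (m : ℕ) : P.Big 0 (x ^ m) := by
  induction m with
  | zero => exact Or.inr ⟨by rw [pow_zero]; exact one_ne_zero, by rw [pow_zero, P.v_one]⟩
  | succ i ih =>
      rw [pow_succ]
      simpa using P.big_mul ih hx

theorem big_sum {b : ℤ} {ι : Type*} (s : Finset ι) (f : ι → F)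
    (hf : ∀ i ∈ s, P.Big b (f i)) : P.Big b (∑ i ∈ s, f i) := by
  classical
  induction s using Finset.induction_on with
  | empty => simpa using P.big_zero b
  | insert _ _ hnotmem ih =>
      rw [Finset.sum_insert hnotmem]
      exact P.big_add (hf _ (Finset.mem_insert_self _ _))
        (ih fun i hi => hf i (Finset.mem_insert_of_mem hi))

variable [CharP F 2]

theorem v_add_lt {x y : F} (hx : x ≠ 0) (hy : y ≠ 0) (hlt : P.v x < P.v y) :
    x + y ≠ 0 ∧ P.v (x + y) = P.v x := by
  have hne : x + y ≠ 0 := by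
    intro h
    have h1 := neg_eq_of_add_eq_zero_right h
    rw [CharTwo.neg_eq] at h1
    rw [h1.symm] at hlt
    exact lt_irrefl _ hlt
  refine ⟨hne, ?_⟩
  have h1 : min (P.v x) (P.v y) ≤ P.v (x + y) := P.v_add x y hx hy hne
  rw [min_eq_left hlt.le] at h1
  have hx2 : x + y + y = x := by
    have h2 : y + y = 0 := CharTwo.add_self_eq_zero y
    linear_combination h2
  by_contra hne2
  have h3 : P.v x < P.v (x + y) := lt_of_le_of_ne h1 (fun h => hne2 h.symm)
  have h4 : min (P.v (x + y)) (P.v y) ≤ P.v (x + y + y) :=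
    P.v_add _ _ hne hy (by rw [hx2]; exact hx)
  rw [hx2] at h4
  have h5 : P.v x < min (P.v (x + y)) (P.v y) := lt_min h3 hlt
  omega

theorem v_add_big {n : ℤ} {x y : F} (hx : x ≠ 0) (hv : P.v x = n) (hy : P.Big (n + 1) y) :
    x + y ≠ 0 ∧ P.v (x + y) = n := by
  rcases hy with rfl | ⟨hy0, hyv⟩
  · simpa using ⟨hx, hv⟩
  · have h := P.v_add_lt hx hy0 (by omega)
    exact ⟨h.1, by rw [h.2, hv]⟩

end Place

section Swap
variable (k : Type*) [Field k]

/-- Evaluation of a bivariate polynomial: outer variable ↦ `z`,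
coefficients (polynomials over `k`) evaluated at `y`. -/
noncomputable def Ev {L : Type*} [Field L] [Algebra k L] (z y : L) :
    Polynomial (Polynomial k) →+* L :=
  Polynomial.eval₂RingHom ((Polynomial.aeval y).toRingHom : Polynomial k →+* L) z

/-- The swap of the two variables of a bivariate polynomial. -/
noncomputable def swapH : Polynomial (Polynomial k) →+* Polynomial (Polynomial k) :=
  Polynomial.eval₂RingHom
    (Polynomial.eval₂RingHom (Polynomial.C.comp Polynomial.C) Polynomial.X)
    (Polynomial.C Polynomial.X)

variable {L : Type*} [Field L] [Algebra k L]

theorem Ev_C (z y : L) (g : Polynomial k) : Ev k z y (Polynomial.C g) = Polynomial.aeval y g := by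
  simp [Ev]

theorem Ev_X (z y : L) : Ev k z y Polynomial.X = z := by
  simp [Ev]

theorem swapH_swapH : (swapH k).comp (swapH k) = RingHom.id _ := by
  apply Polynomial.ringHom_ext'
  · apply Polynomial.ringHom_ext'
    · ext c
      simp [swapH, Polynomial.eval₂_C]
    · simp [swapH, Polynomial.eval₂_C, Polynomial.eval₂_X]
  · simp [swapH, Polynomial.eval₂_C, Polynomial.eval₂_X]

theorem swapH_ne_zero {F : Polynomial (Polynomial k)} (hF : F ≠ 0) : swapH k F ≠ 0 := by
  intro h
  apply hF
  have h2 := congrArg (swapH k) h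
  rw [← RingHom.comp_apply, swapH_swapH] at h2
  simpa using h2

theorem Ev_swapH (z y : L) : (Ev k z y).comp (swapH k) = Ev k y z := by
  apply Polynomial.ringHom_ext'
  · apply Polynomial.ringHom_ext'
    · ext c
      simp [Ev, swapH, Polynomial.eval₂_C, Polynomial.eval₂_X]
    · simp [Ev, swapH, Polynomial.eval₂_C, Polynomial.eval₂_X]
  · simp [Ev, swapH, Polynomial.eval₂_C, Polynomial.eval₂_X]

end Swap

section Alg

variable {k L : Type*} [Field k] [Field L] [Algebra k L]

theorem clear_denoms {y z : L}
    (hz : IsAlgebraic (IntermediateField.adjoin k ({y} : Set L)) z) :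
    ∃ F : Polynomial (Polynomial k), F ≠ 0 ∧ Ev k z y F = 0 := by
  classical
  obtain ⟨p, hp0, hpz⟩ := hz
  have hrep : ∀ i : ℕ, ∃ rs : Polynomial k × Polynomial k,
      ((p.coeff i : L) = 0 ∧ rs.1 = 0 ∧ rs.2 = 1) ∨
      ((p.coeff i : L) ≠ 0 ∧ Polynomial.aeval y rs.2 ≠ 0 ∧
        Polynomial.aeval y rs.1 = (p.coeff i : L) * Polynomial.aeval y rs.2) := by
    intro i
    by_cases hci : (p.coeff i : L) = 0
    · exact ⟨(0, 1), Or.inl ⟨hci, rfl, rfl⟩⟩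
    · obtain ⟨r, s, hrs⟩ := (IntermediateField.mem_adjoin_simple_iff k ((p.coeff i : L))).1
        (p.coeff i).2
      have hs : Polynomial.aeval y s ≠ 0 := by
        intro h; rw [h, div_zero] at hrs; exact hci hrs
      exact ⟨(r, s), Or.inr ⟨hci, hs, by rw [hrs]; field_simp⟩⟩
  choose rs hrs using hrep
  have hs_ne : ∀ i, Polynomial.aeval y (rs i).2 ≠ 0 := by
    intro i
    rcases hrs i with ⟨-, -, h2⟩ | ⟨-, h2, -⟩
    · rw [h2]; simp
    · exact h2
  have hr_eq : ∀ i, Polynomial.aeval y (rs i).1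
      = (p.coeff i : L) * Polynomial.aeval y (rs i).2 := by
    intro i
    rcases hrs i with ⟨h1, h2, -⟩ | ⟨-, -, h3⟩
    · rw [h2, h1]; simp
    · exact h3
  set I := Finset.range (p.natDegree + 1) with hI
  set t : ℕ → Polynomial k := fun i => (rs i).1 * ∏ j ∈ I.erase i, (rs j).2 with ht
  set F : Polynomial (Polynomial k) := ∑ i ∈ I, Polynomial.C (t i) * Polynomial.X ^ i with hF
  have hi0 : p.natDegree ∈ I := by simp [hI]
  have hcoeff : F.coeff p.natDegree = t p.natDegree := by
    rw [hF, Polynomial.finset_sum_coeff]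
    rw [Finset.sum_eq_single p.natDegree]
    · simp [Polynomial.coeff_C_mul, Polynomial.coeff_X_pow]
    · intro j hj hji
      simp [Polynomial.coeff_C_mul, Polynomial.coeff_X_pow, Ne.symm hji]
    · intro h; exact absurd hi0 h
  have hc0 : (p.coeff p.natDegree : L) ≠ 0 := by
    rw [Ne, ZeroMemClass.coe_eq_zero]
    exact fun h => (Polynomial.leadingCoeff_ne_zero.mpr hp0) h
  have htne : t p.natDegree ≠ 0 := by
    intro h
    have h2 : Polynomial.aeval y (t p.natDegree) = 0 := by rw [h]; simp
    rw [ht] at h2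
    simp only [map_mul, map_prod] at h2
    rcases mul_eq_zero.1 h2 with h3 | h3
    · rw [hr_eq] at h3
      rcases mul_eq_zero.1 h3 with h4 | h4
      · exact hc0 h4
      · exact hs_ne _ h4
    · rw [Finset.prod_eq_zero_iff] at h3
      obtain ⟨j, -, hj⟩ := h3
      exact hs_ne j hj
  have hFne : F ≠ 0 := by
    intro h
    rw [h] at hcoeff
    simp at hcoeff
    exact htne hcoeff.symm
  refine ⟨F, hFne, ?_⟩
  have hEv : Ev k z y F
      = ∑ i ∈ I, Polynomial.aeval y (t i) * z ^ i := by
    rw [hF, map_sum]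
    refine Finset.sum_congr rfl fun i _ => ?_
    rw [map_mul, map_pow, Ev_C, Ev_X]
  rw [hEv]
  have hstep : ∀ i ∈ I, Polynomial.aeval y (t i) * z ^ i
      = (∏ j ∈ I, Polynomial.aeval y (rs j).2) * ((p.coeff i : L) * z ^ i) := by
    intro i hi
    rw [ht]
    simp only [map_mul, map_prod]
    rw [hr_eq]
    rw [← Finset.mul_prod_erase I (fun j => Polynomial.aeval y (rs j).2) hi]
    ring
  rw [Finset.sum_congr rfl hstep, ← Finset.mul_sum]
  have hsum : ∑ i ∈ I, (p.coeff i : L) * z ^ i = 0 := by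
    have := Polynomial.aeval_eq_sum_range (p := p) z
    rw [hpz] at this
    rw [← hI] at this
    have h2 : ∀ i ∈ I, p.coeff i • z ^ i = (p.coeff i : L) * z ^ i := by
      intro i _
      rw [Algebra.smul_def, IntermediateField.algebraMap_apply]
    rw [Finset.sum_congr rfl h2] at this
    exact this.symm
  rw [hsum, mul_zero]

theorem isAlg_of_ringHom {R S : Type*} [Field R] [Field S] [Algebra R L] [Algebra S L]
    (g : R →+* S) (hg : ∀ r, algebraMap S L (g r) = algebraMap R L r) {z : L}
    (hz : IsAlgebraic R z) : IsAlgebraic S z := by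
  obtain ⟨p, hp0, hpz⟩ := hz
  refine ⟨p.map g, fun h => hp0 (Polynomial.map_injective g g.injective (by simpa using h)), ?_⟩
  rw [Polynomial.aeval_def, Polynomial.eval₂_map]
  rw [Polynomial.aeval_def] at hpz
  have h2 : (algebraMap S L).comp g = algebraMap R L := RingHom.ext hg
  rw [h2]
  exact hpz

theorem exchange {x u : L} (hu : Transcendental k u)
    (hxu : ∃ F : Polynomial (Polynomial k), F ≠ 0 ∧ Ev k u x F = 0) :
    IsAlgebraic (IntermediateField.adjoin k ({u} : Set L)) x := by
  obtain ⟨F, hF0, hFe⟩ := hxu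
  have hF'0 : swapH k F ≠ 0 := swapH_ne_zero k hF0
  have hF'e : Ev k x u (swapH k F) = 0 := by
    rw [← RingHom.comp_apply, Ev_swapH]
    exact hFe
  set A := IntermediateField.adjoin k ({u} : Set L)
  set uu : ↥A := ⟨u, IntermediateField.mem_adjoin_simple_self k u⟩ with huu
  set ψ : Polynomial k →+* A := (Polynomial.aeval uu).toRingHom with hψdef
  have hψ : ∀ g : Polynomial k, algebraMap A L (ψ g) = Polynomial.aeval u g := by
    intro g
    have : (algebraMap A L) uu = u := rfl
    rw [hψdef]
    simp only [AlgHom.toRingHom_eq_coe, RingHom.coe_coe]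
    rw [← this, Polynomial.aeval_algebraMap_apply]
  have hainj : Function.Injective (Polynomial.aeval u : Polynomial k →ₐ[k] L) :=
    transcendental_iff_injective.1 hu
  have hψinj : Function.Injective ψ := by
    intro a b hab
    apply hainj
    show Polynomial.aeval u a = Polynomial.aeval u b
    rw [← hψ, ← hψ, hab]
  refine ⟨(swapH k F).map ψ,
    fun h => hF'0 (Polynomial.map_injective ψ hψinj (by simpa using h)), ?_⟩
  rw [Polynomial.aeval_def, Polynomial.eval₂_map]
  have h2 : (algebraMap A L).comp ψ = ((Polynomial.aeval u).toRingHom : Polynomial k →+* L) :=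
    RingHom.ext hψ
  rw [h2]
  exact hF'e

theorem allAlg (hL : IsFunctionFieldOneVar k L) {u : L} (hu : Transcendental k u) (z : L) :
    IsAlgebraic (IntermediateField.adjoin k ({u} : Set L)) z := by
  obtain ⟨x, hxt, hfd⟩ := hL
  haveI := hfd
  haveI h1 : Algebra.IsAlgebraic (IntermediateField.adjoin k ({x} : Set L)) L :=
    Algebra.IsAlgebraic.of_finite _ _
  have h2 : IsAlgebraic (IntermediateField.adjoin k ({x} : Set L)) u :=
    Algebra.IsAlgebraic.isAlgebraic u
  have h3 := clear_denoms h2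
  have h4 : IsAlgebraic (IntermediateField.adjoin k ({u} : Set L)) x := exchange hu h3
  set N := IntermediateField.adjoin k ({u} : Set L) with hN
  set Nx := IntermediateField.adjoin (↥N) ({x} : Set L) with hNx
  haveI h5 : Algebra.IsAlgebraic ↥N ↥Nx :=
    IntermediateField.isAlgebraic_adjoin_simple h4.isIntegral
  have hle : IntermediateField.adjoin k ({x} : Set L) ≤ IntermediateField.restrictScalars k Nx := by
    rw [IntermediateField.adjoin_le_iff]
    intro a ha
    rw [Set.mem_singleton_iff] at ha
    subst ha
    show a ∈ (IntermediateField.restrictScalars k Nx : Set L)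
    rw [IntermediateField.coe_restrictScalars]
    exact IntermediateField.mem_adjoin_simple_self (↥N) a
  have hsub : ∀ a : L, a ∈ IntermediateField.adjoin k ({x} : Set L) → a ∈ Nx := by
    intro a ha
    exact hle ha
  let g : ↥(IntermediateField.adjoin k ({x} : Set L)) →+* ↥Nx :=
    { toFun := fun a => ⟨a.1, hsub a.1 a.2⟩,
      map_one' := rfl, map_mul' := fun _ _ => rfl, map_zero' := rfl, map_add' := fun _ _ => rfl }
  haveI h6 : Algebra.IsAlgebraic ↥Nx L :=
    ⟨fun w => isAlg_of_ringHom (L := L) g (fun r => rfl) (Algebra.IsAlgebraic.isAlgebraic w)⟩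
  haveI h7 : Algebra.IsAlgebraic ↥N L := Algebra.IsAlgebraic.trans ↥N ↥Nx L
  exact Algebra.IsAlgebraic.isAlgebraic z

end Alg
section Residue

variable {k L : Type*} [Field k] [IsAlgClosed k] [Field L] [Algebra k L]

theorem alg_mem_range {z : L} (hz : IsAlgebraic k z) : ∃ c : k, algebraMap k L c = z := by
  have h1 : (minpoly k z).degree = 1 :=
    IsAlgClosed.degree_eq_one_of_irreducible k (minpoly.irreducible hz.isIntegral)
  have h2 := minpoly.degree_eq_one_iff.1 h1
  obtain ⟨c, hc⟩ := h2
  exact ⟨c, hc⟩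

theorem transcendental_of_v_ne (P : Place k L) {τ : L} (hτ : τ ≠ 0) (h1 : P.v τ ≠ 0) :
    Transcendental k τ := by
  intro halg
  obtain ⟨c, hc⟩ := alg_mem_range halg
  have hc0 : c ≠ 0 := by rintro rfl; rw [map_zero] at hc; exact hτ hc.symm
  rw [← hc] at h1
  exact h1 (P.v_const c hc0)

theorem aeval_big (P : Place k L) {x : L} (hx : P.Big 0 x) (g : Polynomial k) :
    P.Big 0 (Polynomial.aeval x g) := by
  induction g using Polynomial.induction_on' with
  | add p q hp hq => rw [map_add]; exact P.big_add hp hq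
  | monomial n a =>
      rw [Polynomial.aeval_monomial]
      by_cases ha : a = 0
      · simp [ha, P.big_zero]
      · have h1 : P.Big 0 (algebraMap k L a) :=
          Or.inr ⟨fun h => ha (by simpa using (map_eq_zero_iff _
            (algebraMap k L).injective).1 h), le_of_eq (P.v_const a ha).symm⟩
        simpa using P.big_mul h1 (P.big_pow hx n)

theorem Ev_big (P : Place k L) {τ y : L} (hτ : P.Big 0 τ) (hy : P.Big 0 y)
    (F : Polynomial (Polynomial k)) : P.Big 0 (Ev k τ y F) := by
  induction F using Polynomial.induction_on' with
  | add p q hp hq => rw [map_add]; exact P.big_add hp hq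
  | monomial n g =>
      have h1 : Ev k τ y (Polynomial.monomial n g) = Polynomial.aeval y g * τ ^ n := by
        simp [Ev, Polynomial.eval₂_monomial]
      rw [h1]
      simpa using P.big_mul (aeval_big P hy g) (P.big_pow hτ n)

theorem strip (P : Place k L) {τ y : L} (hτ0 : τ ≠ 0) (F : Polynomial (Polynomial k))
    (hF0 : F ≠ 0) (hFe : Ev k τ y F = 0) :
    ∃ F' : Polynomial (Polynomial k), F' ≠ 0 ∧ Ev k τ y F' = 0 ∧ F'.coeff 0 ≠ 0 := by
  obtain ⟨n, hn⟩ : ∃ n, F.natDegree ≤ n := ⟨F.natDegree, le_rfl⟩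
  induction n generalizing F with
  | zero =>
      refine ⟨F, hF0, hFe, fun hc => ?_⟩
      have hC := Polynomial.eq_C_of_natDegree_le_zero hn
      rw [hc, map_zero] at hC
      exact hF0 hC
  | succ m ih =>
    by_cases hc : F.coeff 0 = 0
    · obtain ⟨G, hG⟩ := Polynomial.X_dvd_iff.2 hc
      have hG0 : G ≠ 0 := by rintro rfl; rw [mul_zero] at hG; exact hF0 hG
      have hGe : Ev k τ y G = 0 := by
        have h2 := hFe
        rw [hG, map_mul, Ev_X] at h2
        rcases mul_eq_zero.1 h2 with h | h
        · exact absurd h hτ0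
        · exact h
      have hdeg : G.natDegree ≤ m := by
        rw [hG, Polynomial.natDegree_X_mul hG0] at hn
        omega
      exact ih G hG0 hGe hdeg
    · exact ⟨F, hF0, hFe, hc⟩

theorem exists_uniformizer_big (P : Place k L) (m : Multiset L)
    (h0 : ∀ a ∈ m, a ≠ 0 ∧ 0 ≤ P.v a) (h1 : 1 ≤ P.v m.prod) :
    ∃ a ∈ m, 1 ≤ P.v a := by
  induction m using Multiset.induction_on with
  | empty => rw [Multiset.prod_zero, P.v_one] at h1; omega
  | cons a s ih =>
      have ha := h0 a (Multiset.mem_cons_self a s)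
      by_cases hva : 1 ≤ P.v a
      · exact ⟨a, Multiset.mem_cons_self a s, hva⟩
      · have hs0 : ∀ b ∈ s, b ≠ 0 ∧ 0 ≤ P.v b :=
          fun b hb => h0 b (Multiset.mem_cons_of_mem hb)
        have hsne : s.prod ≠ 0 := by
          apply Multiset.prod_ne_zero
          intro h
          exact (hs0 0 h).1 rfl
        have hmul : P.v (a * s.prod) = P.v a + P.v s.prod := P.v_mul _ _ ha.1 hsne
        rw [Multiset.prod_cons, hmul] at h1
        have hva0 : P.v a = 0 := by omega
        obtain ⟨b, hb, hvb⟩ := ih hs0 (by omega)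
        exact ⟨b, Multiset.mem_cons_of_mem hb, hvb⟩

theorem residue (hL : IsFunctionFieldOneVar k L) (P : Place k L) {u : L} (hu0 : u ≠ 0)
    (huv : P.v u = 0) :
    ∃ c : k, c ≠ 0 ∧ (u = algebraMap k L (c ^ 4) ∨
      (u - algebraMap k L (c ^ 4) ≠ 0 ∧ 1 ≤ P.v (u - algebraMap k L (c ^ 4)))) := by
  have fourth : ∀ a : k, a ≠ 0 → ∃ c : k, c ≠ 0 ∧ c ^ 4 = a := by
    intro a ha
    obtain ⟨c, hc⟩ := IsAlgClosed.exists_pow_nat_eq a (n := 4) (by norm_num)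
    refine ⟨c, ?_, hc⟩
    rintro rfl
    rw [← hc] at ha
    simp at ha
  by_cases halg : IsAlgebraic k u
  · obtain ⟨c₀, hc₀⟩ := alg_mem_range halg
    have hc₀0 : c₀ ≠ 0 := by rintro rfl; rw [map_zero] at hc₀; exact hu0 hc₀.symm
    obtain ⟨c, hc, hc4⟩ := fourth c₀ hc₀0
    exact ⟨c, hc, Or.inl (by rw [hc4, hc₀])⟩
  · have hu : Transcendental k u := halg
    obtain ⟨τ, hτ0, hτ1⟩ := P.v_surj 1
    have h2 : IsAlgebraic (IntermediateField.adjoin k ({u} : Set L)) τ := allAlg hL hu τ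
    obtain ⟨F, hF0, hFe⟩ := clear_denoms h2
    obtain ⟨F', hF'0, hF'e, hF'c⟩ := strip P hτ0 F hF0 hFe
    set G₀ := F'.coeff 0 with hG₀
    have hkey : Polynomial.aeval u G₀ = 0 ∨ 1 ≤ P.v (Polynomial.aeval u G₀) := by
      have hdec : Polynomial.X * F'.divX + Polynomial.C G₀ = F' := Polynomial.X_mul_divX_add F'
      have h3 : τ * Ev k τ u F'.divX + Polynomial.aeval u G₀ = 0 := by
        have h4 := congrArg (Ev k τ u) hdec
        rw [map_add, map_mul, Ev_X, Ev_C, hF'e] at h4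
        exact h4
      have hE2 : P.Big 0 (Ev k τ u F'.divX) :=
        Ev_big P (Or.inr ⟨hτ0, by omega⟩) (Or.inr ⟨hu0, by omega⟩) F'.divX
      rcases hE2 with hz | ⟨hne, hge⟩
      · left
        rw [hz, mul_zero, zero_add] at h3
        exact h3
      · right
        have h5 : Polynomial.aeval u G₀ = -(τ * Ev k τ u F'.divX) := by
          linear_combination h3
        have h6 : τ * Ev k τ u F'.divX ≠ 0 := mul_ne_zero hτ0 hne
        rw [h5, P.v_neg h6, P.v_mul _ _ hτ0 hne]
        omega
    have hsplits : Polynomial.Splits G₀ := IsAlgClosed.splits G₀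
    have hsplit := hsplits.eq_prod_roots
    have haroots : Polynomial.aeval u G₀ = algebraMap k L G₀.leadingCoeff *
        ((G₀.roots.map (fun a => u - algebraMap k L a)).prod) := by
      conv_lhs => rw [hsplit]
      rw [map_mul, Polynomial.aeval_C]
      congr 1
      rw [map_multiset_prod, Multiset.map_map]
      congr 1
      apply Multiset.map_congr rfl
      intro a _
      simp
    have hlc : G₀.leadingCoeff ≠ 0 := Polynomial.leadingCoeff_ne_zero.mpr hF'c
    have hlcL : algebraMap k L G₀.leadingCoeff ≠ 0 :=
      fun h => hlc ((map_eq_zero_iff _ (algebraMap k L).injective).1 h)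
    by_cases hzero : ∃ a ∈ G₀.roots, u - algebraMap k L a = 0
    · obtain ⟨a, ha, hua⟩ := hzero
      have hua' : u = algebraMap k L a := by linear_combination hua
      have ha0 : a ≠ 0 := by
        rintro rfl
        rw [map_zero] at hua'
        exact hu0 hua'
      obtain ⟨c, hc, hc4⟩ := fourth a ha0
      exact ⟨c, hc, Or.inl (by rw [hc4, ← hua'])⟩
    · push_neg at hzero
      have hfac : ∀ b ∈ G₀.roots.map (fun a => u - algebraMap k L a), b ≠ 0 ∧ 0 ≤ P.v b := by
        intro b hb
        obtain ⟨a, ha, rfl⟩ := Multiset.mem_map.1 hb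
        refine ⟨hzero a ha, ?_⟩
        by_cases ha0 : a = 0
        · rw [ha0, map_zero, sub_zero]
          omega
        · have h7 : algebraMap k L a ≠ 0 :=
            fun h => ha0 ((map_eq_zero_iff _ (algebraMap k L).injective).1 h)
          have h8 : P.v (-(algebraMap k L a)) = 0 := by
            rw [P.v_neg h7, P.v_const a ha0]
          have h9 := P.v_add u (-(algebraMap k L a)) hu0 (neg_ne_zero.2 h7)
            (by rw [← sub_eq_add_neg]; exact hzero a ha)
          rw [← sub_eq_add_neg] at h9
          rw [huv, h8] at h9
          simpa using h9
      have hprodne : (G₀.roots.map (fun a => u - algebraMap k L a)).prod ≠ 0 := by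
        apply Multiset.prod_ne_zero
        intro h
        exact (hfac 0 h).1 rfl
      have haene : Polynomial.aeval u G₀ ≠ 0 := by
        rw [haroots]
        exact mul_ne_zero hlcL hprodne
      have hge1 : 1 ≤ P.v (Polynomial.aeval u G₀) := by
        rcases hkey with h | h
        · exact absurd h haene
        · exact h
      have hvprod : 1 ≤ P.v ((G₀.roots.map (fun a => u - algebraMap k L a)).prod) := by
        rw [haroots, P.v_mul _ _ hlcL hprodne, P.v_const _ hlc] at hge1
        omega
      obtain ⟨b, hb, hvb⟩ := exists_uniformizer_big P _ hfac hvprod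
      obtain ⟨a, ha, rfl⟩ := Multiset.mem_map.1 hb
      have ha0 : a ≠ 0 := by
        rintro rfl
        rw [map_zero, sub_zero] at hvb
        omega
      obtain ⟨c, hc, hc4⟩ := fourth a ha0
      exact ⟨c, hc, Or.inr (by rw [hc4]; exact ⟨hzero a ha, hvb⟩)⟩

end Residue
section Main

variable {k L K : Type*} [Field k] [IsAlgClosed k] [CharP k 2]
  [Field L] [Field K] [Algebra k L] [Algebra k K] [Algebra L K] [IsScalarTower k L K]

/-- The pseudo-tameness predicate for an element of `K`. -/
def Good (v : Place k K) (x : K) : Prop :=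
  ∃ h : K, (h = 0 ∨ 0 ≤ v.v h) ∧ x + h ^ 4 ≠ 0 ∧ Odd (v.v (x + h ^ 4))

theorem cast01 [CharP K 2] (a : ℕ) : ((a : K) = 0 ∨ (a : K) = 1) := by
  rw [CharP.cast_eq_mod K 2 a]
  rcases Nat.mod_two_eq_zero_or_one a with h | h <;> rw [h] <;> simp

theorem add_pow_four [CharP K 2] (a b : K) : (a + b) ^ 4 = a ^ 4 + b ^ 4 := by
  have h2 : (a + b) ^ 2 = a ^ 2 + b ^ 2 := by
    linear_combination CharTwo.add_self_eq_zero (a * b)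
  calc (a + b) ^ 4 = ((a + b) ^ 2) ^ 2 := by ring
    _ = (a ^ 2 + b ^ 2) ^ 2 := by rw [h2]
    _ = (a ^ 2) ^ 2 + (b ^ 2) ^ 2 := by
        linear_combination CharTwo.add_self_eq_zero (a ^ 2 * b ^ 2)
    _ = a ^ 4 + b ^ 4 := by ring

theorem ov_add [CharP K 2] (v : Place k K) {a b : K}
    (ha : a = 0 ∨ 0 ≤ v.v a) (hb : b = 0 ∨ 0 ≤ v.v b) : a + b = 0 ∨ 0 ≤ v.v (a + b) := by
  have ha' : v.Big 0 a := by
    rcases ha with rfl | ha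
    · exact v.big_zero 0
    · by_cases h : a = 0
      · exact Or.inl h
      · exact Or.inr ⟨h, ha⟩
  have hb' : v.Big 0 b := by
    rcases hb with rfl | hb
    · exact v.big_zero 0
    · by_cases h : b = 0
      · exact Or.inl h
      · exact Or.inr ⟨h, hb⟩
  rcases v.big_add ha' hb' with h | ⟨h1, h2⟩
  · exact Or.inl h
  · exact Or.inr h2

theorem good_of_odd {v : Place k K} {x : K} (hx : x ≠ 0) (ho : Odd (v.v x)) : Good v x := by
  refine ⟨0, Or.inl rfl, ?_, ?_⟩
  · simpa using hx
  · have h : x + 0 ^ 4 = x := by ring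
    rw [h]
    exact ho

theorem good_add_pow4 [CharP K 2] {v : Place k K} {x h₀ : K}
    (hh₀ : h₀ = 0 ∨ 0 ≤ v.v h₀) (hg : Good v x) : Good v (x + h₀ ^ 4) := by
  obtain ⟨h, hh, hne, hodd⟩ := hg
  refine ⟨h + h₀, ov_add v hh hh₀, ?_, ?_⟩
  all_goals {
    have hp4 : (h + h₀) ^ 4 = h ^ 4 + h₀ ^ 4 := add_pow_four h h₀
    have hz : h₀ ^ 4 + h₀ ^ 4 = 0 := CharTwo.add_self_eq_zero _
    have heq : x + h₀ ^ 4 + (h + h₀) ^ 4 = x + h ^ 4 := by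
      rw [hp4]; linear_combination hz
    rw [heq]
    first | exact hne | exact hodd
  }

theorem good_smul {v : Place k K} {x : K} (c : k) (hc : c ≠ 0) (hg : Good v x) :
    Good v (algebraMap k K (c ^ 4) * x) := by
  obtain ⟨h, hh, hne, hodd⟩ := hg
  have hcK : algebraMap k K c ≠ 0 :=
    fun hx => hc ((map_eq_zero_iff _ (algebraMap k K).injective).1 hx)
  have hc4 : algebraMap k K (c ^ 4) ≠ 0 :=
    fun hx => hc (pow_eq_zero_iff (by norm_num)
      |>.1 ((map_eq_zero_iff _ (algebraMap k K).injective).1 hx))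
  have hvc : v.v (algebraMap k K c) = 0 := v.v_const c hc
  have hvc4 : v.v (algebraMap k K (c ^ 4)) = 0 := v.v_const _ (pow_ne_zero _ hc)
  refine ⟨algebraMap k K c * h, ?_, ?_, ?_⟩
  · rcases hh with rfl | hh
    · exact Or.inl (by ring)
    · by_cases h0 : h = 0
      · exact Or.inl (by rw [h0]; ring)
      · exact Or.inr (by rw [v.v_mul _ _ hcK h0, hvc]; omega)
  · have heq : algebraMap k K (c ^ 4) * x + (algebraMap k K c * h) ^ 4
        = algebraMap k K (c ^ 4) * (x + h ^ 4) := by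
      rw [map_pow]; ring
    rw [heq]
    exact mul_ne_zero hc4 hne
  · have heq : algebraMap k K (c ^ 4) * x + (algebraMap k K c * h) ^ 4
        = algebraMap k K (c ^ 4) * (x + h ^ 4) := by
      rw [map_pow]; ring
    rw [heq, v.v_mul _ _ hc4 hne, hvc4, zero_add]
    exact hodd

end Main
section MainInd

variable {k L K : Type*} [Field k] [IsAlgClosed k] [CharP k 2]
  [Field L] [Field K] [Algebra k L] [Algebra k K] [Algebra L K] [IsScalarTower k L K]

theorem main_ind (v : Place k K) (w : Place k L) {e : ℤ} (he : 1 ≤ e)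
    (hvw : ∀ x : L, x ≠ 0 → v.v (algebraMap L K x) = e * w.v x)
    (hL : IsFunctionFieldOneVar k L)
    {t : L} (ht0 : t ≠ 0) (hwt : w.v t = 1)
    {h : K} (hh : h = 0 ∨ 0 ≤ v.v h)
    (hg0 : algebraMap L K t + h ^ 4 ≠ 0)
    (hodd : Odd (v.v (algebraMap L K t + h ^ 4))) :
    ∀ N : ℕ, ∀ d : ℤ, 1 ≤ d → ∀ r : L, ∀ E : K,
      (r = 0 ∨ (r ≠ 0 ∧ d ≤ w.v r)) →
      v.Big (v.v (algebraMap L K t + h ^ 4) + 1) E →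
      v.v (algebraMap L K t + h ^ 4) < e * (d + 1) + N →
      Good v (algebraMap L K t + h ^ 4 + algebraMap L K (r * t) + E) := by
  haveI : CharP K 2 := charP_of_injective_algebraMap (algebraMap k K).injective 2
  haveI : CharP L 2 := charP_of_injective_algebraMap (algebraMap k L).injective 2
  set ι := algebraMap L K with hιdef
  set g : K := ι t + h ^ 4 with hg
  set n := v.v g with hn
  have hι0 : ∀ x : L, x ≠ 0 → ι x ≠ 0 :=
    fun x hx hix => hx ((map_eq_zero_iff _ (algebraMap L K).injective).1 hix)
  have hνt : v.v (ι t) = e := by rw [hvw t ht0, hwt, mul_one]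
  have hnodd : n ≠ 0 := by obtain ⟨m0, hm0⟩ := hodd; omega
  have hn1 : 1 ≤ n := by
    by_cases h0 : h = 0
    · have hgt : g = ι t := by rw [hg, h0]; ring
      rw [hn, hgt, hνt]; omega
    · have h4 : h ^ 4 ≠ 0 := pow_ne_zero _ h0
      have hvh0 : 0 ≤ v.v h := by rcases hh with h' | h'; exact absurd h' h0; exact h'
      have hv4 : v.v (h ^ 4) = 4 * v.v h := by rw [v.v_pow h0 4]; push_cast; ring
      have hmin := v.v_add (ι t) (h ^ 4) (hι0 t ht0) h4 (by rw [← hg]; exact hg0)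
      rw [← hg, ← hn, hνt, hv4] at hmin
      omega
  have hh1 : h = 0 ∨ (h ≠ 0 ∧ 1 ≤ v.v h) := by
    by_cases h0 : h = 0
    · exact Or.inl h0
    · right
      refine ⟨h0, ?_⟩
      by_contra hlt
      have hvh0 : 0 ≤ v.v h := by rcases hh with h' | h'; exact absurd h' h0; exact h'
      have hvh : v.v h = 0 := by omega
      have hv4 : v.v (h ^ 4) = 0 := by rw [v.v_pow h0 4, hvh]; ring
      have hlt2 : v.v (h ^ 4) < v.v (ι t) := by rw [hv4, hνt]; omega
      have hveq := (v.v_add_lt (pow_ne_zero _ h0) (hι0 t ht0) hlt2).2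
      have hcomm : g = h ^ 4 + ι t := by rw [hg]; ring
      rw [← hcomm] at hveq
      omega
  have easy : ∀ r : L, ∀ E : K, (r = 0 ∨ (r ≠ 0 ∧ n < e * (w.v r + 1))) →
      v.Big (n + 1) E → Good v (g + ι (r * t) + E) := by
    intro r E hr hE
    rcases hr with rfl | ⟨hr0, hrb⟩
    · have hexp : g + ι (0 * t) + E = g + E := by rw [zero_mul, map_zero, add_zero]
      rw [hexp]
      obtain ⟨hne, hveq⟩ := v.v_add_big hg0 hn.symm hE
      exact good_of_odd hne (by rw [hveq]; exact hodd)
    · have hrt0 : r * t ≠ 0 := mul_ne_zero hr0 ht0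
      have hwrt : w.v (r * t) = w.v r + 1 := by rw [w.v_mul r t hr0 ht0, hwt]
      have hv_rt : v.v (ι (r * t)) = e * (w.v r + 1) := by rw [hvw _ hrt0, hwrt]
      have hBig_rt : v.Big (n + 1) (ι (r * t)) := Or.inr ⟨hι0 _ hrt0, by omega⟩
      obtain ⟨hne1, hveq1⟩ := v.v_add_big hg0 hn.symm hBig_rt
      obtain ⟨hne2, hveq2⟩ := v.v_add_big hne1 hveq1 hE
      exact good_of_odd hne2 (by rw [hveq2]; exact hodd)
  intro N
  induction N with
  | zero =>
      intro d hd r E hr hE hbound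
      apply easy r E ?_ hE
      rcases hr with rfl | ⟨hr0, hrd⟩
      · exact Or.inl rfl
      · right
        refine ⟨hr0, ?_⟩
        by_contra hle
        push_neg at hle
        have h1 : e * (d + 1) ≤ e * (w.v r + 1) :=
          mul_le_mul_of_nonneg_left (by omega) (by omega)
        omega
  | succ m ih =>
      intro d hd r E hr hE hbound
      rcases hr with rfl | ⟨hr0, hrd⟩
      · exact easy 0 E (Or.inl rfl) hE
      by_cases hcaseE : n < e * (w.v r + 1)
      · exact easy r E (Or.inr ⟨hr0, hcaseE⟩) hE
      push_neg at hcaseE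
      set m₁ : ℕ := (w.v r).toNat with hm₁def
      have hm₁ : (m₁ : ℤ) = w.v r := Int.toNat_of_nonneg (by omega)
      have hm₁1 : 1 ≤ (m₁ : ℤ) := by omega
      have htm : t ^ m₁ ≠ 0 := pow_ne_zero _ ht0
      set ξ := r / t ^ m₁ with hξdef
      have hξ0 : ξ ≠ 0 := div_ne_zero hr0 htm
      have hξv : w.v ξ = 0 := by
        rw [hξdef, w.v_div hr0 htm, w.v_pow ht0, hwt, mul_one, ← hm₁]
        omega
      obtain ⟨c, hc0, hcase⟩ := residue hL w hξ0 hξv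
      set cL := algebraMap k L (c ^ 4) with hcL
      have hcL0 : cL ≠ 0 :=
        fun hx => (pow_ne_zero 4 hc0) ((map_eq_zero_iff _ (algebraMap k L).injective).1 hx)
      set r' := (ξ - cL) * t ^ m₁ with hr'def
      have hrt : r = ξ * t ^ m₁ := (div_mul_cancel₀ r htm).symm
      have halg : r * t = cL * t ^ (m₁ + 1) + r' * t := by
        rw [hr'def]
        nth_rewrite 1 [hrt]
        ring
      set cK := algebraMap k K c with hcK
      have hcK0 : cK ≠ 0 :=
        fun hx => hc0 ((map_eq_zero_iff _ (algebraMap k K).injective).1 hx)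
      have hvcK : v.v cK = 0 := v.v_const c hc0
      have hιcL : ι cL = cK ^ 4 := by
        rw [hcL, hcK, hιdef, ← map_pow, ← IsScalarTower.algebraMap_apply k L K]
      have hιt : ι t = h ^ 4 + g := by
        rw [hg]
        linear_combination -CharTwo.add_self_eq_zero (h ^ 4)
      set Δ : K := ∑ j ∈ Finset.range (m₁ + 1),
        (h ^ 4) ^ j * g ^ (m₁ + 1 - j) * ((m₁ + 1).choose j : K) with hΔ
      have hpow : ι t ^ (m₁ + 1) = Δ + (h ^ (m₁ + 1)) ^ 4 := by
        rw [hιt, add_pow, Finset.sum_range_succ, hΔ]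
        congr 1
        rw [Nat.sub_self, pow_zero, mul_one, Nat.choose_self, Nat.cast_one, mul_one,
          ← pow_right_comm]
      have hΔbig : v.Big (n + 1) Δ := by
        rw [hΔ]
        apply v.big_sum
        intro j hj
        have hjr : j ≤ m₁ := by
          have := Finset.mem_range.1 hj
          omega
        rcases cast01 (K := K) ((m₁ + 1).choose j) with hc01 | hc01
        · rw [hc01, mul_zero]; exact v.big_zero _
        rw [hc01, mul_one]
        have hcast : ((m₁ + 1 - j : ℕ) : ℤ) = (m₁ : ℤ) + 1 - j := by omega
        rcases hh1 with h0 | ⟨h0, hvh⟩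
        · by_cases hj0 : j = 0
          · subst hj0
            rw [pow_zero, one_mul]
            refine Or.inr ⟨pow_ne_zero _ hg0, ?_⟩
            rw [v.v_pow hg0, hcast]
            have hmn : (1 : ℤ) * 1 ≤ (m₁ : ℤ) * n :=
              mul_le_mul (by omega) (by omega) (by omega) (by omega)
            push_cast
            nlinarith [hmn, hn1]
          · left
            rw [h0, zero_pow (by norm_num : 4 ≠ 0), zero_pow hj0, zero_mul]
        · have hterm0 : (h ^ 4) ^ j * g ^ (m₁ + 1 - j) ≠ 0 :=
            mul_ne_zero (pow_ne_zero _ (pow_ne_zero _ h0)) (pow_ne_zero _ hg0)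
          refine Or.inr ⟨hterm0, ?_⟩
          rw [v.v_mul _ _ (pow_ne_zero _ (pow_ne_zero _ h0)) (pow_ne_zero _ hg0),
            v.v_pow (pow_ne_zero _ h0), v.v_pow h0, v.v_pow hg0, hcast]
          by_cases hj0 : j = 0
          · subst hj0
            have hmn : (1 : ℤ) * 1 ≤ (m₁ : ℤ) * n :=
              mul_le_mul (by omega) (by omega) (by omega) (by omega)
            push_cast
            nlinarith [hmn, hn1]
          · have hj1 : 1 ≤ (j : ℤ) := by omega
            have h4j : (4 : ℤ) * 1 ≤ (j : ℤ) * (4 * v.v h) := by nlinarith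
            have hmn : (1 : ℤ) * n ≤ ((m₁ : ℤ) + 1 - j) * n :=
              mul_le_mul_of_nonneg_right (by omega) (by omega)
            push_cast
            nlinarith [hmn, hn1]
      set E' := E + cK ^ 4 * Δ with hE'
      have hcK4 : v.Big 0 (cK ^ 4) :=
        Or.inr ⟨pow_ne_zero _ hcK0, by rw [v.v_pow hcK0, hvcK]; omega⟩
      have hE'big : v.Big (n + 1) E' := by
        apply v.big_add hE
        have := v.big_mul hcK4 hΔbig
        rwa [zero_add] at this
      have hr'cond : r' = 0 ∨ (r' ≠ 0 ∧ (m₁ : ℤ) + 1 ≤ w.v r') := by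
        rcases hcase with hceq | ⟨hcne, hcge⟩
        · left
          rw [hr'def, hceq]
          simp
        · right
          refine ⟨mul_ne_zero hcne htm, ?_⟩
          rw [hr'def, w.v_mul _ _ hcne htm, w.v_pow ht0, hwt, mul_one]
          omega
      have hbound' : n < e * (((m₁ : ℤ) + 1) + 1) + m := by
        have h1 : e * (d + 1) ≤ e * ((m₁ : ℤ) + 1) :=
          mul_le_mul_of_nonneg_left (by omega) (by omega)
        have h2 : e * (((m₁ : ℤ) + 1) + 1) = e * ((m₁ : ℤ) + 1) + e := by ring
        omega
      have hGood := ih ((m₁ : ℤ) + 1) (by omega) r' E' hr'cond hE'big hbound'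
      have hov : cK * h ^ (m₁ + 1) = 0 ∨ 0 ≤ v.v (cK * h ^ (m₁ + 1)) := by
        rcases hh1 with h0 | ⟨h0, hvh⟩
        · left
          rw [h0, zero_pow (by omega : m₁ + 1 ≠ 0), mul_zero]
        · right
          rw [v.v_mul _ _ hcK0 (pow_ne_zero _ h0), hvcK, v.v_pow h0]
          have : (0 : ℤ) ≤ ((m₁ + 1 : ℕ) : ℤ) * v.v h :=
            mul_nonneg (by positivity) (by omega)
          omega
      have hfinal := good_add_pow4 hov hGood
      have hexpr : g + ι (r' * t) + E' + (cK * h ^ (m₁ + 1)) ^ 4 = g + ι (r * t) + E := by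
        have e1 : ι (r * t) = ι cL * ι t ^ (m₁ + 1) + ι (r' * t) := by
          rw [← map_pow, ← map_mul, ← map_add]
          exact congrArg ι halg
        have e2 : (cK * h ^ (m₁ + 1)) ^ 4 = cK ^ 4 * (h ^ (m₁ + 1)) ^ 4 := by ring
        rw [e1, hιcL, hpow, hE', e2]
        ring
      rw [hexpr] at hfinal
      exact hfinal

end MainInd

/-- Pseudo-tameness of a finite extension `K/L` at a place `v` of `K` is
independent of the choice of uniformizer of the induced place `w` of `L`:
if some uniformizer `t` at `w` admits `h ∈ O_v` with `v (t + h⁴)` odd, then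
every uniformizer `t'` at `w` admits such an `h'`. -/
theorem extPseudoTame_indep_uniformizer
    (k L K : Type*) [Field k] [IsAlgClosed k] [CharP k 2]
    [Field L] [Field K]
    [Algebra k L] [Algebra k K] [Algebra L K] [IsScalarTower k L K]
    [FiniteDimensional L K]
    (hL : IsFunctionFieldOneVar k L) (hK : IsFunctionFieldOneVar k K)
    (v : Place k K) (w : Place k L) (hvw : Induces v w)
    (hex : ∃ t : L, t ≠ 0 ∧ w.v t = 1 ∧
      ∃ h : K, (h = 0 ∨ 0 ≤ v.v h) ∧ algebraMap L K t + h ^ 4 ≠ 0 ∧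
        Odd (v.v (algebraMap L K t + h ^ 4))) :
    ∀ t' : L, t' ≠ 0 → w.v t' = 1 →
      ∃ h' : K, (h' = 0 ∨ 0 ≤ v.v h') ∧ algebraMap L K t' + h' ^ 4 ≠ 0 ∧
        Odd (v.v (algebraMap L K t' + h' ^ 4)) := by
  haveI : CharP K 2 := charP_of_injective_algebraMap (algebraMap k K).injective 2
  haveI : CharP L 2 := charP_of_injective_algebraMap (algebraMap k L).injective 2
  obtain ⟨e, he1, hee⟩ := hvw
  obtain ⟨t, ht0, hwt, h, hh, hg0, hodd⟩ := hex
  intro t' ht'0 hwt'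
  set ι := algebraMap L K with hιdef
  set u := t' / t with hu
  have hu0 : u ≠ 0 := div_ne_zero ht'0 ht0
  have huv : w.v u = 0 := by rw [hu, w.v_div ht'0 ht0, hwt', hwt]; ring
  obtain ⟨c, hc0, hcase⟩ := residue hL w hu0 huv
  have hut : u * t = t' := div_mul_cancel₀ t' ht0
  have hGt : Good v (ι t) := ⟨h, hh, hg0, hodd⟩
  have hc40 : (c ^ 4 : k) ≠ 0 := pow_ne_zero _ hc0
  rcases hcase with hceq | ⟨hcne, hcge⟩
  · have hGt2 := good_smul c hc0 hGt
    have hexpr : algebraMap k K (c ^ 4) * ι t = ι t' := by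
      rw [IsScalarTower.algebraMap_apply k L K (c ^ 4), hιdef, ← map_mul]
      congr 1
      rw [← hceq, hut]
    rw [hexpr] at hGt2
    exact hGt2
  · set cL := algebraMap k L (c ^ 4) with hcL
    have hcL0 : cL ≠ 0 :=
      fun hx => hc40 ((map_eq_zero_iff _ (algebraMap k L).injective).1 hx)
    set r := (u - cL) / cL with hr
    have hr0 : r ≠ 0 := div_ne_zero hcne hcL0
    have hvcL : w.v cL = 0 := by rw [hcL]; exact w.v_const _ hc40
    have hwr : 1 ≤ w.v r := by
      rw [hr, w.v_div hcne hcL0, hvcL]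
      omega
    set g := ι t + h ^ 4 with hg
    have hbound : v.v g < e * (1 + 1) + ((v.v g).toNat : ℤ) := by
      have h1 := Int.self_le_toNat (v.v g)
      have h2 : e * (1 + 1) = 2 * e := by ring
      omega
    have hmain := main_ind v w he1 hee hL ht0 hwt hh hg0 hodd
      (v.v g).toNat 1 le_rfl r 0 (Or.inr ⟨hr0, hwr⟩) (v.big_zero _) hbound
    rw [add_zero] at hmain
    have hsm := good_smul c hc0 hmain
    have h1 : ι cL = algebraMap k K (c ^ 4) := by
      rw [hcL, hιdef, ← IsScalarTower.algebraMap_apply k L K]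
    have h2 : cL * r = u - cL := by
      rw [hr]
      field_simp
    have h3 : cL * (r * t) = (u - cL) * t := by rw [← h2]; ring
    have h4 : cL * t + (u - cL) * t = t' := by rw [← hut]; ring
    have h5 : ι (cL * t) + ι ((u - cL) * t) = ι t' := by
      rw [← map_add]
      exact congrArg ι h4
    have h6 : (algebraMap k K c * h) ^ 4 = ι cL * h ^ 4 := by
      rw [h1, mul_pow, ← map_pow]
    have hexpr : algebraMap k K (c ^ 4) * (g + ι (r * t))
        = ι t' + (algebraMap k K c * h) ^ 4 := by
      calc algebraMap k K (c ^ 4) * (g + ι (r * t))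
          = ι cL * ι t + ι cL * ι (r * t) + ι cL * h ^ 4 := by rw [h1, hg]; ring
        _ = ι (cL * t) + ι (cL * (r * t)) + ι cL * h ^ 4 := by rw [← map_mul, ← map_mul]
        _ = ι (cL * t) + ι ((u - cL) * t) + ι cL * h ^ 4 := by rw [h3]
        _ = ι t' + ι cL * h ^ 4 := by rw [h5]
        _ = ι t' + (algebraMap k K c * h) ^ 4 := by rw [h6]
    rw [hexpr] at hsm
    have hov : algebraMap k K c * h = 0 ∨ 0 ≤ v.v (algebraMap k K c * h) := by
      have hcK0 : algebraMap k K c ≠ 0 :=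
        fun hx => hc0 ((map_eq_zero_iff _ (algebraMap k K).injective).1 hx)
      rcases hh with rfl | hvh
      · exact Or.inl (mul_zero _)
      · by_cases h0 : h = 0
        · exact Or.inl (by rw [h0, mul_zero])
        · right
          rw [v.v_mul _ _ hcK0 h0, v.v_const c hc0]
          omega
    have hfin := good_add_pow4 hov hsm
    have hexpr2 : ι t' + (algebraMap k K c * h) ^ 4 + (algebraMap k K c * h) ^ 4 = ι t' := by
      linear_combination CharTwo.add_self_eq_zero ((algebraMap k K c * h) ^ 4)
    rw [hexpr2] at hfin
    exact hfin
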